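/- For any parameter w ∈ ℝ^m and noise values v_i satisfying y_i = x_iᵀw + v_i for i = 1, …, T, any initialization w_0, any step size η > 0, and any number of steps T ≥ 1, the SGD iterates satisfy ‖w − w_0‖² + η Σ_{i=1}^T v_i² = ‖w − w_T‖² + η Σ_{i=1}^T (1 − η‖x_i‖²) e_i² + η Σ_{i=1}^T e_{p,i}², where e_i := y_i − x_iᵀw_{i−1} and e_{p,i} := x_iᵀw − x_iᵀw_{i−1}. -/
import Mathlib


open scoped RealInnerProductSpace

/-- Lemma 2, fundamental telescoped identity for SGD on square loss of a
linear model. Data points are indexed `1, 2, …` (step `i+1` uses data point `i+1`). -/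
theorem stmt_1 {m : ℕ} (T : ℕ) (hT : 1 ≤ T)
    (x : ℕ → EuclideanSpace ℝ (Fin m)) (y : ℕ → ℝ)
    (η : ℝ) (hη : 0 < η)
    (w₀ : EuclideanSpace ℝ (Fin m))
    (w : ℕ → EuclideanSpace ℝ (Fin m)) (hw0 : w 0 = w₀)
    (hupd : ∀ i : ℕ,
      w (i + 1) = w i + (η * (y (i + 1) - ⟪x (i + 1), w i⟫)) • x (i + 1))
    (wstar : EuclideanSpace ℝ (Fin m)) (v : ℕ → ℝ)
    (hdata : ∀ i : ℕ, y (i + 1) = ⟪x (i + 1), wstar⟫ + v (i + 1)) :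
    ‖wstar - w₀‖ ^ 2 + η * ∑ i ∈ Finset.range T, v (i + 1) ^ 2 =
      ‖wstar - w T‖ ^ 2
        + η * ∑ i ∈ Finset.range T,
            (1 - η * ‖x (i + 1)‖ ^ 2) * (y (i + 1) - ⟪x (i + 1), w i⟫) ^ 2
        + η * ∑ i ∈ Finset.range T,
            (⟪x (i + 1), wstar⟫ - ⟪x (i + 1), w i⟫) ^ 2 := by
  have step : ∀ i : ℕ,
      ‖wstar - w i‖ ^ 2 - ‖wstar - w (i + 1)‖ ^ 2 =
        η * ((1 - η * ‖x (i + 1)‖ ^ 2) * (y (i + 1) - ⟪x (i + 1), w i⟫) ^ 2)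
          + η * ((⟪x (i + 1), wstar⟫ - ⟪x (i + 1), w i⟫) ^ 2)
          - η * (v (i + 1) ^ 2) := by
    intro i
    set e : ℝ := y (i + 1) - ⟪x (i + 1), w i⟫ with he
    have hv : v (i + 1) = e - (⟪x (i + 1), wstar⟫ - ⟪x (i + 1), w i⟫) := by
      have := hdata i; rw [he]; linarith
    have hsub : wstar - w (i + 1) = (wstar - w i) - (η * e) • x (i + 1) := by
      rw [hupd i]; abel
    have hexp : ‖wstar - w (i + 1)‖ ^ 2 =
        ‖wstar - w i‖ ^ 2 - 2 * ((η * e) * ⟪wstar - w i, x (i + 1)⟫)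
          + (η * e) ^ 2 * ‖x (i + 1)‖ ^ 2 := by
      rw [hsub, @norm_sub_sq_real, real_inner_smul_right, norm_smul]
      simp [mul_pow, sq_abs]
    have hip : ⟪wstar - w i, x (i + 1)⟫ = ⟪x (i + 1), wstar⟫ - ⟪x (i + 1), w i⟫ := by
      rw [real_inner_comm, inner_sub_right]
    rw [hexp, hip, hv]
    ring
  have tel : ∑ i ∈ Finset.range T,
      (‖wstar - w i‖ ^ 2 - ‖wstar - w (i + 1)‖ ^ 2) =
      ‖wstar - w 0‖ ^ 2 - ‖wstar - w T‖ ^ 2 :=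
    Finset.sum_range_sub' (fun i => ‖wstar - w i‖ ^ 2) T
  have := (Finset.sum_congr rfl (fun i _ => step i)).symm.trans tel
  rw [Finset.sum_sub_distrib, Finset.sum_add_distrib, ← Finset.mul_sum,
    ← Finset.mul_sum, ← Finset.mul_sum] at this
  rw [hw0] at this
  linarith
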